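/- For every odd d ≥ 3 and every m ∈ [m̂*, m⁻_d] with m̂* = -d/(d-1), the function x_m(t) = mt + 1 - ((m+1)t + 1)^d satisfies x_m(0) = 0, x_m'(t) ≤ 0 for all t ∈ [0, 1/(1-m)] with equality only at t = 0 and m = m̂*, and x_m(1/(1-m)) < (1/(1-m))(1 - 2/√e) < 0. -/

import Mathlib

open Set

set_option maxHeartbeats 1000000 in
theorem stmt17 (d : ℕ) (hd : 3 ≤ d) (hodd : Odd d)
    (mstar : ℝ) (hmstar : mstar = -(d : ℝ) / (d - 1))
    (mminus : ℝ) (hmminus : mminus = 4 * d / (1 - d - Real.sqrt (9 * d ^ 2 - 10 * d + 1)))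
    (m : ℝ) (hm : m ∈ Icc mstar mminus)
    (x : ℝ → ℝ) (hx : ∀ t : ℝ, x t = m * t + 1 - ((m + 1) * t + 1) ^ d) :
    x 0 = 0 ∧
    (∀ t ∈ Icc (0 : ℝ) (1 / (1 - m)),
      deriv x t ≤ 0 ∧ (deriv x t = 0 → t = 0 ∧ m = mstar)) ∧
    x (1 / (1 - m)) < (1 / (1 - m)) * (1 - 2 / Real.sqrt (Real.exp 1)) ∧
    (1 / (1 - m)) * (1 - 2 / Real.sqrt (Real.exp 1)) < 0 := by
  have hD3 : (3:ℝ) ≤ (d:ℝ) := by exact_mod_cast hd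
  have hRlt : Real.sqrt (9 * (d:ℝ) ^ 2 - 10 * d + 1) < 3 * d + 1 := by
    rw [Real.sqrt_lt' (by positivity)]
    nlinarith
  have hR0 : 0 ≤ Real.sqrt (9 * (d:ℝ) ^ 2 - 10 * d + 1) := Real.sqrt_nonneg _
  have hden : 1 - (d:ℝ) - Real.sqrt (9 * (d:ℝ) ^ 2 - 10 * d + 1) < 0 := by linarith
  have hmm1 : mminus < -1 := by
    rw [hmminus, div_lt_iff_of_neg hden]
    nlinarith
  have hm1 : m + 1 < 0 := by have := hm.2; linarith
  have hm2' : -(d:ℝ) ≤ m * ((d:ℝ) - 1) := by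
    have h := hm.1
    rw [hmstar, div_le_iff₀ (by linarith : (0:ℝ) < (d:ℝ) - 1)] at h
    linarith
  have h1m : (0:ℝ) < 1 - m := by linarith
  have hT0 : (0:ℝ) < 1 / (1 - m) := by positivity
  have hxe : x = fun t => m * t + 1 - ((m + 1) * t + 1) ^ d := funext hx
  have hderiv : ∀ t : ℝ, deriv x t =
      m - (d:ℝ) * ((m + 1) * t + 1) ^ (d - 1) * (m + 1) := by
    intro t
    have h1 : HasDerivAt (fun t : ℝ => (m + 1) * t + 1) (m + 1) t := by
      simpa using ((hasDerivAt_id t).const_mul (m + 1)).add_const 1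
    have h2 : HasDerivAt (fun t : ℝ => ((m + 1) * t + 1) ^ d)
        ((d:ℝ) * ((m + 1) * t + 1) ^ (d - 1) * (m + 1)) t := h1.pow d
    have h3 : HasDerivAt (fun t : ℝ => m * t + 1) m t := by
      simpa using ((hasDerivAt_id t).const_mul m).add_const 1
    rw [hxe]
    exact (h3.sub h2).deriv
  refine ⟨by rw [hx]; simp, ?_, ?_, ?_⟩
  · intro t ht
    obtain ⟨ht0, ht1⟩ := ht
    set s : ℝ := (m + 1) * t + 1 with hs
    have hs1 : s ≤ 1 := by
      have : (m + 1) * t ≤ 0 := mul_nonpos_of_nonpos_of_nonneg (by linarith) ht0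
      simp only [hs]; linarith
    have hs0 : 0 < s := by
      have h5 : (m + 1) * (1 / (1 - m)) ≤ (m + 1) * t :=
        mul_le_mul_of_nonpos_left ht1 (le_of_lt hm1)
      have h6 : (m + 1) * (1 / (1 - m)) + 1 = 2 / (1 - m) := by
        field_simp; ring
      have h7 : 0 < 2 / (1 - m) := by positivity
      simp only [hs]; linarith
    have hp1 : s ^ (d - 1) ≤ 1 := pow_le_one₀ hs0.le hs1
    have hp0 : 0 < s ^ (d - 1) := pow_pos hs0 _
    have hco : (0:ℝ) < -((d:ℝ) * (m + 1)) := by nlinarith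
    have key : (d:ℝ) * (m + 1) ≤ (d:ℝ) * s ^ (d - 1) * (m + 1) := by
      nlinarith [mul_le_mul_of_nonneg_left hp1 hco.le]
    have hle : deriv x t ≤ 0 := by
      rw [hderiv t, ← hs]
      nlinarith
    refine ⟨hle, fun heq => ?_⟩
    rw [hderiv t, ← hs] at heq
    have hseq : s = 1 := by
      by_contra hne
      have hlt : s < 1 := lt_of_le_of_ne hs1 hne
      have hplt : s ^ (d - 1) < 1 := pow_lt_one₀ hs0.le hlt (by omega)
      have : (d:ℝ) * (m + 1) < (d:ℝ) * s ^ (d - 1) * (m + 1) := by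
        nlinarith [mul_lt_mul_of_pos_left hplt hco]
      nlinarith
    have ht00 : t = 0 := by
      have h8 : (m + 1) * t = 0 := by simp only [hs] at hseq; linarith
      rcases mul_eq_zero.1 h8 with h | h
      · exact absurd h (by linarith)
      · exact h
    refine ⟨ht00, ?_⟩
    rw [hseq, one_pow, mul_one] at heq
    have hd1 : ((d:ℝ) - 1) ≠ 0 := by linarith
    rw [hmstar, eq_div_iff hd1]
    linear_combination -heq
  · set T : ℝ := 1 / (1 - m) with hT
    have hsub : (m + 1) * T + 1 = 2 * T := by
      simp only [hT]; field_simp; ring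
    have hmT : m * T + 1 = T := by
      simp only [hT]; field_simp; ring
    have hxT : x T = T - (2 * T) ^ d := by rw [hx, hsub, hmT]
    have h2d1 : (0:ℝ) < 2 * (d:ℝ) - 1 := by linarith
    have h2d2 : (0:ℝ) < 2 * (d:ℝ) - 2 := by linarith
    have h2T : (2 * (d:ℝ) - 2) / (2 * (d:ℝ) - 1) ≤ 2 * T := by
      have h9 : 2 * T = 2 / (1 - m) := by rw [hT]; ring
      rw [h9, div_le_div_iff₀ h2d1 h1m]
      nlinarith
    have hexp1 : Real.exp (-(1 / (2 * (d:ℝ) - 2))) < (2 * (d:ℝ) - 2) / (2 * (d:ℝ) - 1) := by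
      have hA0 : (0:ℝ) < (2 * (d:ℝ) - 2) / (2 * (d:ℝ) - 1) := by positivity
      have h1A : 1 / ((2 * (d:ℝ) - 2) / (2 * (d:ℝ) - 1)) < Real.exp (1 / (2 * (d:ℝ) - 2)) := by
        have hlt := Real.add_one_lt_exp (x := 1 / (2 * (d:ℝ) - 2)) (by positivity)
        have heq9 : 1 / ((2 * (d:ℝ) - 2) / (2 * (d:ℝ) - 1)) = 1 / (2 * (d:ℝ) - 2) + 1 := by
          rw [one_div_div, div_add_one h2d2.ne']; ring
        rw [heq9]; exact hlt
      have h10 := inv_strictAnti₀ (by positivity) h1A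
      rw [Real.exp_neg]
      simpa using h10
    have hTpos : 0 < T := hT0
    have hexp2 : Real.exp (-(1 / 2)) < (2 * T) ^ (d - 1) := by
      have hc : ((d - 1 : ℕ) : ℝ) = (d:ℝ) - 1 := by
        push_cast [Nat.cast_sub (by omega : 1 ≤ d)]; ring
      have e1 : Real.exp (-(1 / (2 * (d:ℝ) - 2))) ^ (d - 1) = Real.exp (-(1 / 2)) := by
        rw [← Real.exp_nat_mul, hc]
        congr 1
        have hd1 : (d:ℝ) - 1 ≠ 0 := by linarith
        have hd2 : (2 * (d:ℝ) - 2) ≠ 0 := by linarith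
        field_simp
      calc Real.exp (-(1 / 2)) = Real.exp (-(1 / (2 * (d:ℝ) - 2))) ^ (d - 1) := e1.symm
        _ < ((2 * (d:ℝ) - 2) / (2 * (d:ℝ) - 1)) ^ (d - 1) :=
            pow_lt_pow_left₀ hexp1 (Real.exp_pos _).le (by omega)
        _ ≤ (2 * T) ^ (d - 1) := pow_le_pow_left₀ (by positivity) h2T _
    have hpow : (2 * T) ^ d = 2 * T * (2 * T) ^ (d - 1) := by
      conv_lhs => rw [show d = (d - 1) + 1 from by omega]
      rw [pow_succ']
    have hmul : 2 * T * Real.exp (-(1 / 2)) < 2 * T * (2 * T) ^ (d - 1) :=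
      mul_lt_mul_of_pos_left hexp2 (by positivity)
    have hsq : Real.sqrt (Real.exp 1) = Real.exp (1 / 2) := by
      rw [← Real.exp_half]
    rw [hxT, hsq]
    have h2e : 2 / Real.exp (1 / 2) = 2 * Real.exp (-(1 / 2)) := by
      rw [Real.exp_neg]; ring
    rw [h2e]
    nlinarith
  · have hsqe : Real.sqrt (Real.exp 1) < 2 := by
      rw [Real.sqrt_lt' (by norm_num)]
      nlinarith [Real.exp_one_lt_d9]
    have hsq0 : 0 < Real.sqrt (Real.exp 1) := Real.sqrt_pos.2 (Real.exp_pos 1)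
    have h11 : 1 < 2 / Real.sqrt (Real.exp 1) := (one_lt_div hsq0).2 hsqe
    exact mul_neg_of_pos_of_neg hT0 (by linarith)
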